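/- For n ≥ 4 and a ∈ [1/2, a*(n,1)] with a*(n,1) = (1/2)√(2n/(n−1)), the function q ↦ b*(n,1,a,q) over integers 1 < q < n attains its maximum at q = n−1, where b*(n,1,a,q) = (1/2)·√( [(n−q+1)(2q − 4a²(q−1))] / [(n−q)(2(q−1) − 4a²(q−2))] ). -/
import Mathlib


/-- `b*(n,1,a,q)` with `p = 1`:
`(1/2)√( [(n−q+1)(2q − 4a²(q−1))] / [(n−q)(2(q−1) − 4a²(q−2))] )`. -/
noncomputable def bstar1 (n : ℕ) (a : ℝ) (q : ℕ) : ℝ :=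
  (1 / 2) * Real.sqrt (
    (((n : ℝ) - q + 1) * (2 * (q : ℝ) - 4 * a^2 * ((q : ℝ) - 1))) /
    (((n : ℝ) - q) * (2 * ((q : ℝ) - 1) - 4 * a^2 * ((q : ℝ) - 2))))

set_option maxHeartbeats 1000000 in
/-- For `a ∈ [1/2, a*(n,1)]`, `q ↦ b*(n,1,a,q)` over `1 < q < n` is maximized at
`q = n − 1`. -/
theorem bstar1_max_at_q_eq_n_sub_one
    (n : ℕ) (a : ℝ) (hn : 4 ≤ n)
    (ha : 1/2 ≤ a) (ha' : a ≤ (1 / 2) * Real.sqrt (2 * (n : ℝ) / ((n : ℝ) - 1))) :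
    ∀ q : ℕ, 1 < q → q < n → bstar1 n a q ≤ bstar1 n a (n - 1) := by
  intro q hq1 hq2
  have hn4 : (4:ℝ) ≤ (n:ℝ) := by exact_mod_cast hn
  have hQ2 : (2:ℝ) ≤ (q:ℝ) := by exact_mod_cast hq1
  have hQn : (q:ℝ) ≤ (n:ℝ) - 1 := by
    have : (q:ℝ) + 1 ≤ (n:ℝ) := by exact_mod_cast hq2
    linarith
  have ht1 : (1:ℝ) ≤ 4 * a ^ 2 := by nlinarith
  have ha0 : (0:ℝ) ≤ a := le_trans (by norm_num) ha
  have hN1 : (0:ℝ) < (n:ℝ) - 1 := by linarith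
  have hs : (0:ℝ) ≤ 2 * (n:ℝ) / ((n:ℝ) - 1) := by
    apply div_nonneg <;> linarith
  have ht2 : 4 * a ^ 2 * ((n:ℝ) - 1) ≤ 2 * (n:ℝ) := by
    have h2 : a ^ 2 ≤ ((1/2) * Real.sqrt (2 * (n:ℝ) / ((n:ℝ) - 1))) ^ 2 :=
      pow_le_pow_left₀ ha0 ha' 2
    rw [mul_pow, Real.sq_sqrt hs] at h2
    have h3 : 2 * (n:ℝ) / ((n:ℝ) - 1) * ((n:ℝ) - 1) = 2 * (n:ℝ) :=
      div_mul_cancel₀ _ (ne_of_gt hN1)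
    nlinarith [mul_le_mul_of_nonneg_right h2 (le_of_lt hN1)]
  have hDq : 0 < 2 * ((q:ℝ) - 1) - 4 * a ^ 2 * ((q:ℝ) - 2) := by
    nlinarith [mul_nonneg (sub_nonneg.2 ht1) (sub_nonneg.2 hQn)]
  have hDn : 0 < 2 * (((n:ℝ) - 1) - 1) - 4 * a ^ 2 * (((n:ℝ) - 1) - 2) := by nlinarith
  have hBq : 0 < 2 * (q:ℝ) - 4 * a ^ 2 * ((q:ℝ) - 1) := by
    nlinarith [mul_nonneg (sub_nonneg.2 ht1) (sub_nonneg.2 hQn)]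
  have hBn : 0 < 2 * ((n:ℝ) - 1) - 4 * a ^ 2 * (((n:ℝ) - 1) - 1) := by nlinarith
  have hcast : ((n - 1 : ℕ) : ℝ) = (n:ℝ) - 1 := by
    have h1 : 1 ≤ n := by omega
    push_cast [h1]; ring
  unfold bstar1
  rw [hcast]
  apply mul_le_mul_of_nonneg_left _ (by norm_num)
  apply Real.sqrt_le_sqrt
  rw [div_le_div_iff₀ (by nlinarith) (by nlinarith)]
  nlinarith [mul_nonneg (sub_nonneg.2 ht1) (sub_nonneg.2 hQn),
    mul_nonneg (sub_nonneg.2 hQ2) (sub_nonneg.2 hQn),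
    mul_nonneg (mul_nonneg (sub_nonneg.2 ht1) (sub_nonneg.2 hQ2)) (sub_nonneg.2 hQn),
    mul_nonneg (mul_nonneg (sub_nonneg.2 hQ2) (sub_nonneg.2 hQn)) (sub_nonneg.2 ht2),
    mul_nonneg (mul_nonneg (sub_nonneg.2 ht1) (sub_nonneg.2 hQn)) (sub_nonneg.2 ht2),
    sq_nonneg ((q:ℝ) - 2), sq_nonneg ((n:ℝ) - 1 - (q:ℝ)), mul_pos hDq hBn, mul_pos hBq hDn]
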